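/- If x is a real-valued random variable with E[x] = 0 and E[x^2] < ∞ (and E[x^2] ≠ 0), then Pr(x ≥ 0) ≥ (E|x|)^2 / (4 E[x^2]). -/

import Mathlib

open MeasureTheory

/-- Paley–Zygmund-type bound: a centered, square-integrable real random variable is
nonnegative with probability at least `(E|x|)² / (4 E[x²])`. -/
theorem prob_nonneg_ge_moment_ratio
    {Ω : Type*} [MeasurableSpace Ω] (μ : Measure Ω) [IsProbabilityMeasure μ]
    (x : Ω → ℝ) (hx : Integrable x μ)
    (hx2 : Integrable (fun ω => (x ω) ^ 2) μ)
    (hmean : ∫ ω, x ω ∂μ = 0)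
    (hne : ∫ ω, (x ω) ^ 2 ∂μ ≠ 0) :
    (∫ ω, |x ω| ∂μ) ^ 2 / (4 * ∫ ω, (x ω) ^ 2 ∂μ)
      ≤ (μ {ω | 0 ≤ x ω}).toReal := by
  -- measurable modification
  set g : Ω → ℝ := hx.1.mk x with hgdef
  have hgm : StronglyMeasurable g := hx.1.stronglyMeasurable_mk
  have hxg : x =ᵐ[μ] g := hx.1.ae_eq_mk
  have hg : Integrable g μ := hx.congr hxg
  have hg2 : Integrable (fun ω => (g ω) ^ 2) μ :=
    hx2.congr (hxg.mono fun ω h => by simp [h])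
  have hgmean : ∫ ω, g ω ∂μ = 0 := by rw [← integral_congr_ae hxg]; exact hmean
  have habs : ∫ ω, |x ω| ∂μ = ∫ ω, |g ω| ∂μ :=
    integral_congr_ae (hxg.mono fun ω h => by simp [h])
  have hsq : ∫ ω, (x ω) ^ 2 ∂μ = ∫ ω, (g ω) ^ 2 ∂μ :=
    integral_congr_ae (hxg.mono fun ω h => by simp [h])
  set S : Set Ω := {ω | 0 ≤ g ω} with hSdef
  have hSmeas : MeasurableSet S := measurableSet_le measurable_const hgm.measurable
  have hμeq : μ {ω | 0 ≤ x ω} = μ S := by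
    refine measure_congr ?_
    filter_upwards [hxg] with ω h
    change (0 ≤ x ω) = (0 ≤ g ω)
    rw [h]
  -- positive part
  have hsq_pos : 0 < ∫ ω, (g ω) ^ 2 ∂μ := by
    rcases (integral_nonneg (f := fun ω => (g ω) ^ 2) fun ω => sq_nonneg (g ω)).lt_or_eq with h | h
    · exact h
    · exact absurd (hsq.trans h.symm) hne
  have hplus : ∫ ω, max (g ω) 0 ∂μ = (∫ ω, |g ω| ∂μ) / 2 := by
    have : (fun ω => max (g ω) 0) = fun ω => (g ω + |g ω|) / 2 := by
      funext ω; rcases le_or_gt 0 (g ω) with h | h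
      · rw [max_eq_left h, abs_of_nonneg h]; ring
      · rw [max_eq_right h.le, abs_of_neg h]; ring
    rw [this]
    rw [integral_div, integral_add hg hg.abs, hgmean, zero_add]
  -- Hölder / Cauchy-Schwarz
  have hmemf : MemLp (fun ω => max (g ω) 0) (ENNReal.ofReal 2) μ := by
    have h2 : (ENNReal.ofReal 2) = 2 := by norm_num
    rw [h2]
    have hmx : MemLp g 2 μ := by
      refine (memLp_two_iff_integrable_sq hg.1).2 ?_
      exact hg2.congr (Filter.Eventually.of_forall fun ω => by ring_nf)
    exact hmx.sup (memLp_const 0 : MemLp (fun _ : Ω => (0:ℝ)) 2 μ)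
  have hmemh : MemLp (S.indicator fun _ => (1:ℝ)) (ENNReal.ofReal 2) μ :=
    memLp_indicator_const _ hSmeas 1 (Or.inr (measure_ne_top μ S))
  have hCS := integral_mul_le_Lp_mul_Lq_of_nonneg
      (f := fun ω => max (g ω) 0) (g := S.indicator fun _ => (1:ℝ))
      (Real.holderConjugate_iff_eq_conjExponent (by norm_num) |>.2 (by norm_num))
      (Filter.Eventually.of_forall fun ω => le_max_right _ _)
      (Filter.Eventually.of_forall fun ω => Set.indicator_nonneg (fun _ _ => zero_le_one) ω)
      hmemf hmemh
  have hprod : ∫ ω, max (g ω) 0 * (S.indicator fun _ => (1:ℝ)) ω ∂μ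
      = ∫ ω, max (g ω) 0 ∂μ := by
    refine integral_congr_ae (Filter.Eventually.of_forall fun ω => ?_)
    by_cases h : ω ∈ S
    · simp [Set.indicator_of_mem h]
    · have : g ω < 0 := not_le.1 h
      simp [Set.indicator_of_notMem h, max_eq_right this.le]
  have hfsq : ∫ ω, max (g ω) 0 ^ (2:ℝ) ∂μ ≤ ∫ ω, (g ω) ^ 2 ∂μ := by
    rw [show (fun ω => max (g ω) 0 ^ (2:ℝ)) = fun ω => max (g ω) 0 ^ (2:ℕ) by
      funext ω; rw [← Real.rpow_natCast (max (g ω) 0) 2]; norm_num]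
    refine integral_mono_of_nonneg (Filter.Eventually.of_forall fun ω => by positivity) hg2
      (Filter.Eventually.of_forall fun ω => ?_)
    rcases le_or_gt 0 (g ω) with h | h
    · simp [max_eq_left h]
    · simp only [max_eq_right h.le]
      simpa using sq_nonneg (g ω)
  have hhsq : ∫ ω, (S.indicator fun _ => (1:ℝ)) ω ^ (2:ℝ) ∂μ = (μ S).toReal := by
    have : (fun ω => (S.indicator fun _ => (1:ℝ)) ω ^ (2:ℝ))
        = S.indicator fun _ => (1:ℝ) := by
      funext ω; by_cases h : ω ∈ S <;>
        simp [Set.indicator_of_mem, Set.indicator_of_notMem, h]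
    rw [this, integral_indicator_const _ hSmeas]
    simp
    rfl
  -- combine
  have key : (∫ ω, |g ω| ∂μ) / 2 ≤
      (∫ ω, (g ω) ^ 2 ∂μ) ^ (1/2 : ℝ) * ((μ S).toReal) ^ (1/2 : ℝ) := by
    rw [hprod, hhsq, hplus] at hCS
    refine hCS.trans ?_
    refine mul_le_mul_of_nonneg_right ?_ (Real.rpow_nonneg ENNReal.toReal_nonneg _)
    exact Real.rpow_le_rpow (integral_nonneg fun ω => Real.rpow_nonneg (le_max_right _ _) _)
      hfsq (by norm_num)
  have habs_nonneg : 0 ≤ ∫ ω, |g ω| ∂μ := integral_nonneg fun ω => abs_nonneg _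
  have hμnonneg : (0:ℝ) ≤ (μ S).toReal := ENNReal.toReal_nonneg
  -- square both sides
  have key2 : ((∫ ω, |g ω| ∂μ) / 2) ^ 2 ≤ (∫ ω, (g ω) ^ 2 ∂μ) * (μ S).toReal := by
    have := mul_self_le_mul_self (by positivity) key
    calc ((∫ ω, |g ω| ∂μ) / 2) ^ 2 = ((∫ ω, |g ω| ∂μ) / 2) * ((∫ ω, |g ω| ∂μ) / 2) := sq _
      _ ≤ ((∫ ω, (g ω) ^ 2 ∂μ) ^ (1/2 : ℝ) * ((μ S).toReal) ^ (1/2 : ℝ))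
          * ((∫ ω, (g ω) ^ 2 ∂μ) ^ (1/2 : ℝ) * ((μ S).toReal) ^ (1/2 : ℝ)) := this
      _ = ((∫ ω, (g ω) ^ 2 ∂μ) ^ (1/2 : ℝ) * (∫ ω, (g ω) ^ 2 ∂μ) ^ (1/2 : ℝ))
          * (((μ S).toReal) ^ (1/2 : ℝ) * ((μ S).toReal) ^ (1/2 : ℝ)) := by ring
      _ = (∫ ω, (g ω) ^ 2 ∂μ) * (μ S).toReal := by
          have haux : ∀ a : ℝ, 0 ≤ a → a ^ (1/2 : ℝ) * a ^ (1/2 : ℝ) = a := fun a ha => by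
            rw [← Real.rpow_add' ha (by norm_num)]; norm_num
          rw [haux _ hsq_pos.le, haux _ hμnonneg]
  rw [habs, hsq, hμeq]
  rw [div_le_iff₀ (by positivity)]
  calc (∫ ω, |g ω| ∂μ) ^ 2 = (((∫ ω, |g ω| ∂μ) / 2) ^ 2) * 4 := by ring
    _ ≤ ((∫ ω, (g ω) ^ 2 ∂μ) * (μ S).toReal) * 4 := by gcongr
    _ = (μ S).toReal * (4 * ∫ ω, (g ω) ^ 2 ∂μ) := by ring
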